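/- Suppose F is a CDF on ℝ that is constant equal to w ∈ (0,1) on an interval (c₀, d₀) with d₀ − c₀ > a + b, where (c₀, d₀) is a maximal such interval (F < w to the left of c₀ and F > w to the right of d₀ in the appropriate limiting sense). Then for α = b·w/(b·w + a·(1−w)), the Huber functional H^α_{a,b}(F) equals [c₀ + b, d₀ − a]. -/

import Mathlib

open Set MeasureTheory Filter Topology intervalIntegral

/-- If a CDF `F` is constant equal to `w ∈ (0,1)` on a maximal interval `(c₀,d₀)` with
`d₀ − c₀ > a + b`, then for `α = bw/(bw + a(1−w))` the Huber functional `H^α_{a,b}(F)`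
equals `[c₀ + b, d₀ − a]`. -/
theorem stmt7 (a b w c₀ d₀ : ℝ) (ha : 0 < a) (hb : 0 < b) (hw : w ∈ Set.Ioo (0 : ℝ) 1)
    (F : ℝ → ℝ) (hmono : Monotone F) (h0 : ∀ t, 0 ≤ F t) (h1 : ∀ t, F t ≤ 1)
    (hrc : ∀ x, ContinuousWithinAt F (Set.Ici x) x)
    (hbot : Tendsto F atBot (nhds 0)) (htop : Tendsto F atTop (nhds 1))
    (hlen : a + b < d₀ - c₀)
    (hconst : ∀ t ∈ Set.Ioo c₀ d₀, F t = w)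
    (hleft : ∀ t < c₀, F t < w) (hright : ∀ t, d₀ < t → w < F t) :
    {x : ℝ | (b * w / (b * w + a * (1 - w))) * ∫ t in x..(x + a), (1 - F t)
        = (1 - b * w / (b * w + a * (1 - w))) * ∫ t in (x - b)..x, F t}
      = Set.Icc (c₀ + b) (d₀ - a) := by
  obtain ⟨hw0, hw1⟩ := hw
  have hw1' : 0 < 1 - w := by linarith
  have hD : 0 < b * w + a * (1 - w) := by positivity
  have hcd : c₀ < d₀ := by linarith
  have hintF : ∀ u v : ℝ, IntervalIntegrable F volume u v := fun u v =>
    hmono.intervalIntegrable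
  have hint1F : ∀ u v : ℝ, IntervalIntegrable (fun t => 1 - F t) volume u v := fun u v =>
    (_root_.intervalIntegrable_const).sub (hintF u v)
  -- F c₀ = w by right continuity
  have hc0 : F c₀ = w := by
    have h1 : Tendsto F (𝓝[>] c₀) (𝓝 (F c₀)) :=
      (hrc c₀).mono_left (nhdsWithin_mono _ Ioi_subset_Ici_self)
    have h2 : Tendsto F (𝓝[>] c₀) (𝓝 w) := by
      have hev : ∀ᶠ t in 𝓝[>] c₀, F t = w := by
        filter_upwards [Ioo_mem_nhdsGT_of_mem ⟨le_refl c₀, hcd⟩] with t ht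
        exact hconst t ht
      exact Tendsto.congr' (hev.mono fun t ht => ht.symm) tendsto_const_nhds
    exact tendsto_nhds_unique h1 h2
  have hge : ∀ t, c₀ ≤ t → w ≤ F t := fun t ht => hc0 ▸ hmono ht
  have hle : ∀ t, t < d₀ → F t ≤ w := by
    intro t ht
    rcases le_or_gt t c₀ with h | h
    · have h2 : F t ≤ F ((c₀ + d₀)/2) := hmono (by linarith)
      rwa [hconst ((c₀ + d₀)/2) ⟨by linarith, by linarith⟩] at h2
    · exact le_of_eq (hconst t ⟨h, ht⟩)
  have heqw : ∀ t, c₀ ≤ t → t < d₀ → F t = w := fun t ht1 ht2 =>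
    le_antisymm (hle t ht2) (hge t ht1)
  have hne : ∀ᵐ t : ℝ, t ≠ d₀ := by
    rw [ae_iff]; simp [Set.setOf_eq_eq_singleton]
  -- integral of F over subintervals of [c₀, d₀]
  have hIF : ∀ u v : ℝ, c₀ ≤ u → u ≤ v → v ≤ d₀ → (∫ t in u..v, F t) = w * (v - u) := by
    intro u v h1 h2 h3
    rw [integral_of_le h2]
    have : ∫ t in Set.Ioc u v, F t = ∫ _t in Set.Ioc u v, w := by
      apply MeasureTheory.setIntegral_congr_ae measurableSet_Ioc
      filter_upwards [hne] with t htne ht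
      exact heqw t (h1.trans ht.1.le) (lt_of_le_of_ne (ht.2.trans h3) htne)
    rw [this, MeasureTheory.setIntegral_const, Real.volume_real_Ioc_of_le h2,
      smul_eq_mul]
    ring
  have hI1F : ∀ u v : ℝ, c₀ ≤ u → u ≤ v → v ≤ d₀ →
      (∫ t in u..v, (1 - F t)) = (1 - w) * (v - u) := by
    intro u v h1 h2 h3
    rw [integral_sub _root_.intervalIntegrable_const (hintF u v), intervalIntegral.integral_const, hIF u v h1 h2 h3,
      smul_eq_mul]
    ring
  -- reduce the defining equation
  have hiff : ∀ p q : ℝ,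
      ((b * w / (b * w + a * (1 - w))) * p = (1 - b * w / (b * w + a * (1 - w))) * q
        ↔ b * w * p = a * (1 - w) * q) := by
    intro p q
    rw [show (1 - b * w / (b * w + a * (1 - w))) = a * (1 - w) / (b * w + a * (1 - w)) by
        field_simp; ring,
      div_mul_eq_mul_div, div_mul_eq_mul_div, div_eq_div_iff hD.ne' hD.ne']
    exact mul_left_inj' hD.ne'
  -- strict bounds for x right of d₀ - a
  have L1 : ∀ x, d₀ - a < x → (∫ t in x..(x + a), (1 - F t)) < a * (1 - w) := by
    intro x hx
    have hxc : c₀ < x := by linarith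
    set s := (max x d₀ + (x + a)) / 2 with hsdef
    have hM : max x d₀ < x + a := max_lt (by linarith) (by linarith)
    have hMs : max x d₀ < s := by rw [hsdef]; linarith
    have hxs : x ≤ s := ((le_max_left x d₀).trans hMs.le)
    have hds : d₀ < s := lt_of_le_of_lt (le_max_right x d₀) hMs
    have hsxa : s < x + a := by rw [hsdef]; linarith
    have hFs : w < F s := hright s hds
    rw [← integral_add_adjacent_intervals (hint1F x s) (hint1F s (x + a))]
    have hb1 : (∫ t in x..s, (1 - F t)) ≤ (1 - w) * (s - x) := by
      have := integral_mono_on hxs (hint1F x s) _root_.intervalIntegrable_const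
        (g := fun _ => 1 - w)
        (fun t ht => by have := hge t (hxc.le.trans ht.1); simp; linarith)
      rwa [intervalIntegral.integral_const, smul_eq_mul, mul_comm] at this
    have hb2 : (∫ t in s..(x + a), (1 - F t)) ≤ (1 - F s) * (x + a - s) := by
      have := integral_mono_on hsxa.le (hint1F s (x + a)) _root_.intervalIntegrable_const
        (g := fun _ => 1 - F s)
        (fun t ht => by have := hmono ht.1; simp; linarith)
      rwa [intervalIntegral.integral_const, smul_eq_mul, mul_comm] at this
    have hb3 : (1 - F s) * (x + a - s) < (1 - w) * (x + a - s) :=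
      mul_lt_mul_of_pos_right (by linarith) (by linarith)
    nlinarith
  have L2 : ∀ x, d₀ - a < x → b * w ≤ ∫ t in (x - b)..x, F t := by
    intro x hx
    have h1 : c₀ < x - b := by linarith
    have := integral_mono_on (by linarith : x - b ≤ x)
      (_root_.intervalIntegrable_const (c := w)) (hintF (x - b) x)
      (fun t ht => hge t (h1.le.trans ht.1))
    rwa [intervalIntegral.integral_const, smul_eq_mul, show (x - (x - b)) * w = b * w by ring] at this
  -- strict bounds for x left of c₀ + b
  have L3 : ∀ x, x < c₀ + b → (∫ t in (x - b)..x, F t) < b * w := by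
    intro x hx
    have hxd : x < d₀ := by linarith
    set s := ((x - b) + min x c₀) / 2 with hsdef
    have hM : x - b < min x c₀ := lt_min (by linarith) (by linarith)
    have hsM : s < min x c₀ := by rw [hsdef]; linarith
    have hsx : s < x := lt_of_lt_of_le hsM (min_le_left x c₀)
    have hsc : s < c₀ := lt_of_lt_of_le hsM (min_le_right x c₀)
    have hxbs : x - b < s := by rw [hsdef]; linarith
    have hFs : F s < w := hleft s hsc
    rw [← integral_add_adjacent_intervals (hintF (x - b) s) (hintF s x)]
    have hb1 : (∫ t in (x - b)..s, F t) ≤ F s * (s - (x - b)) := by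
      have := integral_mono_on hxbs.le (hintF (x - b) s) _root_.intervalIntegrable_const
        (g := fun _ => F s) (fun t ht => hmono ht.2)
      rwa [intervalIntegral.integral_const, smul_eq_mul, mul_comm] at this
    have hb2 : (∫ t in s..x, F t) ≤ w * (x - s) := by
      have := integral_mono_on hsx.le (hintF s x) _root_.intervalIntegrable_const
        (g := fun _ => w) (fun t ht => hle t (lt_of_le_of_lt ht.2 hxd))
      rwa [intervalIntegral.integral_const, smul_eq_mul, mul_comm] at this
    have hb3 : F s * (s - (x - b)) < w * (s - (x - b)) :=
      mul_lt_mul_of_pos_right hFs (by linarith)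
    nlinarith
  have L4 : ∀ x, x < c₀ + b → a * (1 - w) ≤ ∫ t in x..(x + a), (1 - F t) := by
    intro x hx
    have h1 : x + a < d₀ := by linarith
    have := integral_mono_on (by linarith : x ≤ x + a)
      (_root_.intervalIntegrable_const (c := 1 - w)) (hint1F x (x + a))
      (fun t ht => by have := hle t (lt_of_le_of_lt ht.2 h1); simp; linarith)
    rwa [intervalIntegral.integral_const, smul_eq_mul, show (x + a - x) * (1 - w) = a * (1 - w) by ring] at this
  -- conclude
  ext x
  simp only [Set.mem_setOf_eq, Set.mem_Icc]
  rw [hiff]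
  constructor
  · intro hx
    constructor
    · by_contra h
      push_neg at h
      have h1 := L3 x h
      have h2 := L4 x h
      have h3 : a * (1 - w) * (∫ t in (x - b)..x, F t) < a * (1 - w) * (b * w) :=
        mul_lt_mul_of_pos_left h1 (by positivity)
      have h4 : b * w * (a * (1 - w)) ≤ b * w * (∫ t in x..(x + a), (1 - F t)) :=
        mul_le_mul_of_nonneg_left h2 (by positivity)
      nlinarith
    · by_contra h
      push_neg at h
      have h1 := L1 x h
      have h2 := L2 x h
      have h3 : b * w * (∫ t in x..(x + a), (1 - F t)) < b * w * (a * (1 - w)) :=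
        mul_lt_mul_of_pos_left h1 (by positivity)
      have h4 : a * (1 - w) * (b * w) ≤ a * (1 - w) * (∫ t in (x - b)..x, F t) :=
        mul_le_mul_of_nonneg_left h2 (by positivity)
      nlinarith
  · rintro ⟨hx1, hx2⟩
    rw [hIF (x - b) x (by linarith) (by linarith) (by linarith),
      hI1F x (x + a) (by linarith) (by linarith) (by linarith)]
    ring
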